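/- Call a pair (a, b) ∈ ℤ × ℤ primary if either (b ≡ 0 (mod 4) and a ≡ 1 (mod 4)) or (b ≡ 2 (mod 4) and a ≡ 3 (mod 4)). For every n ≥ 1, the coefficient of X^n in the formal power series X ∏_{m=1}^∞ (1−X^{4m})^2 (1−X^{8m})^2 (the q-expansion of η(4z)^2 η(8z)^2) equals the finite sum Σ (a + bi), taken over all primary pairs (a, b) with a^2 + b^2 = n. (In particular this complex sum is a rational integer.) -/

import Mathlib

open PowerSeries Finset

/-- A pair `(a, b) ∈ ℤ × ℤ` is primary if `b ≡ 0 (mod 4)` and `a ≡ 1 (mod 4)`, or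
`b ≡ 2 (mod 4)` and `a ≡ 3 (mod 4)`. -/
def IsPrimaryPair (a b : ℤ) : Prop :=
  (b ≡ 0 [ZMOD 4] ∧ a ≡ 1 [ZMOD 4]) ∨ (b ≡ 2 [ZMOD 4] ∧ a ≡ 3 [ZMOD 4])

instance : ∀ a b : ℤ, Decidable (IsPrimaryPair a b) := fun a b => by
  unfold IsPrimaryPair; infer_instance

noncomputable section
namespace Eta32

abbrev R := PowerSeries ℤ

/-- congruence mod X^M -/
def MC (M : ℕ) (f g : R) : Prop := (X : R) ^ M ∣ f - g

lemma MC.refl (M : ℕ) (f : R) : MC M f f := by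
  unfold MC; rw [sub_self]; exact dvd_zero _

lemma MC.symm {M f g} (h : MC M f g) : MC M g f := by
  unfold MC at *; rw [← neg_sub]; exact h.neg_right

lemma MC.trans {M : ℕ} {f g h : R} (h1 : MC M f g) (h2 : MC M g h) : MC M f h := by
  unfold MC at *
  have := dvd_add h1 h2
  rwa [sub_add_sub_cancel] at this

lemma MC.add {M f g f' g'} (h1 : MC M f g) (h2 : MC M f' g') : MC M (f + f') (g + g') := by
  unfold MC at *
  have := dvd_add h1 h2
  rwa [sub_add_sub_comm] at this

lemma MC.mul {M f g f' g'} (h1 : MC M f g) (h2 : MC M f' g') : MC M (f * f') (g * g') := by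
  unfold MC at *
  have : f * f' - g * g' = (f - g) * f' + g * (f' - g') := by ring
  rw [this]
  exact dvd_add (h1.mul_right _) (h2.mul_left _)

lemma MC.mul_left {M f g} (c : R) (h : MC M f g) : MC M (c * f) (c * g) :=
  (MC.refl M c).mul h

lemma MC.mul_right {M f g} (c : R) (h : MC M f g) : MC M (f * c) (g * c) :=
  h.mul (MC.refl M c)

lemma MC.neg {M f g} (h : MC M f g) : MC M (-f) (-g) := by
  unfold MC at *; rw [neg_sub_neg, ← neg_sub]; exact h.neg_right

lemma MC.sum {M : ℕ} {ι : Type*} (s : Finset ι) (f g : ι → R)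
    (h : ∀ i ∈ s, MC M (f i) (g i)) : MC M (∑ i ∈ s, f i) (∑ i ∈ s, g i) := by
  unfold MC at *
  rw [← Finset.sum_sub_distrib]
  exact Finset.dvd_sum h

lemma MC.prod {M : ℕ} {ι : Type*} (s : Finset ι) (f g : ι → R)
    (h : ∀ i ∈ s, MC M (f i) (g i)) : MC M (∏ i ∈ s, f i) (∏ i ∈ s, g i) := by
  classical
  induction s using Finset.induction with
  | empty => exact MC.refl M 1
  | insert _ _ hx ih =>
    rw [Finset.prod_insert hx, Finset.prod_insert hx]
    exact (h _ (mem_insert_self _ _)).mul (ih fun i hi => h i (mem_insert_of_mem hi))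

lemma MC.zero_of (M : ℕ) (f : R) (e : ℕ) (he : M ≤ e) : MC M ((X:R)^e * f) 0 := by
  unfold MC; rw [sub_zero]
  exact Dvd.dvd.mul_right (pow_dvd_pow _ he) f

lemma MC.coeff_eq {M f g} (h : MC M f g) {i : ℕ} (hi : i < M) :
    coeff i f = coeff i g := by
  unfold MC at h; rw [X_pow_dvd_iff] at h
  have := h i hi
  rw [map_sub, sub_eq_zero] at this
  exact this

lemma MC.cancel_unit {M : ℕ} {u f g : R} (hu : IsUnit u) (h : MC M (u * f) (u * g)) :
    MC M f g := by
  obtain ⟨v, hv⟩ := hu.exists_left_inv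
  have h2 := h.mul_left v
  unfold MC at h2 ⊢
  have e : v * (u * f) - v * (u * g) = (v * u) * (f - g) := by ring
  rw [e, hv, one_mul] at h2
  exact h2

lemma isUnit_one_sub_pow (e : ℕ) (he : 0 < e) : IsUnit (1 - (X:R)^e) := by
  rw [PowerSeries.isUnit_iff_constantCoeff]
  simp [zero_pow he.ne']

/-- Gaussian binomial coefficients in q = X^8, as integer power series. -/
def gb : ℕ → ℕ → R
  | _, 0 => 1
  | 0, _+1 => 0
  | n+1, k+1 => gb n (k+1) + X^(8*(n-k)) * gb n k

@[simp] lemma gb_zero_right (n : ℕ) : gb n 0 = 1 := by cases n <;> rfl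

@[simp] lemma gb_zero_left (k : ℕ) : gb 0 (k+1) = 0 := rfl

lemma gb_succ_succ (n k : ℕ) : gb (n+1) (k+1) = gb n (k+1) + X^(8*(n-k)) * gb n k := rfl

lemma gb_eq_zero {n k : ℕ} (h : n < k) : gb n k = 0 := by
  induction n generalizing k with
  | zero => obtain ⟨k, rfl⟩ := Nat.exists_eq_add_of_lt h; simp [Nat.add_comm]
  | succ n ih =>
    obtain ⟨k, rfl⟩ := Nat.exists_eq_add_of_lt h
    rw [show n + 1 + k = (n + k) + 1 by omega, gb_succ_succ]
    rw [ih (by omega), ih (by omega)]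
    simp

@[simp] lemma gb_self (n : ℕ) : gb n n = 1 := by
  induction n with
  | zero => rfl
  | succ n ih => rw [gb_succ_succ, gb_eq_zero (by omega), ih]; simp

/-- the second Pascal rule -/
lemma gb_pascal2 (n k : ℕ) : gb (n+1) (k+1) = X^(8*(k+1)) * gb n (k+1) + gb n k := by
  induction n generalizing k with
  | zero =>
    cases k with
    | zero => simp [gb_succ_succ]
    | succ k => simp [gb_succ_succ, gb_eq_zero (show 0 < k + 2 by omega),
        gb_eq_zero (show 0 < k + 1 by omega), gb_eq_zero (show 1 < k + 2 by omega)]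
  | succ n ih =>
    cases k with
    | zero =>
      have r1 := gb_succ_succ (n+1) 0
      have r3 := gb_succ_succ n 0
      simp only [Nat.sub_zero, gb_zero_right, mul_one] at r1 r3
      have i0 := ih 0
      simp only [gb_zero_right] at i0
      rw [gb_zero_right] at *
      linear_combination r1 - (X:R)^8 * r3 + i0
    | succ k =>
      rcases le_or_gt (k+1) n with hk | hk
      · obtain ⟨t, rfl⟩ : ∃ t, n = k + 1 + t := ⟨n - (k+1), by omega⟩
        have r1 := gb_succ_succ (k+1+t+1) (k+1)
        rw [show k+1+t+1 - (k+1) = t+1 by omega] at r1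
        have r2 := gb_succ_succ (k+1+t) (k+1)
        rw [show k+1+t - (k+1) = t by omega] at r2
        have r3 := gb_succ_succ (k+1+t) k
        rw [show k+1+t - k = t+1 by omega] at r3
        have i1 := ih (k+1)
        have i0 := ih k
        linear_combination r1 + i1 - (X:R)^(8*(k+2)) * r2 + (X:R)^(8*(t+1)) * i0 - r3
      · -- k+1 > n : everything in sight with index ≥ n+2 vanishes
        rcases eq_or_lt_of_le (show n ≤ k by omega) with he | hl
        · subst he
          rw [gb_self, gb_eq_zero (show n+1 < n+1+1 by omega), gb_self]
          simp
        · rw [gb_eq_zero (show n+1+1 < k+1+1 by omega),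
            gb_eq_zero (show n+1 < k+1+1 by omega),
            gb_eq_zero (show n+1 < k+1 by omega)]
          simp


/-- exponent 4*(k^2+k), k = m - N -/
def ej (N m : ℕ) : ℕ := 4*((m*m + N*N + m) - (2*m*N + N))
/-- exponent 4*k^2, k = m - N -/
def eg (N m : ℕ) : ℕ := 4*((m*m + N*N) - (2*m*N))

lemma k_bound (N m : ℕ) : 2*m*N + N ≤ m*m + N*N + m := by
  rcases le_total m N with h | h
  · obtain ⟨d, rfl⟩ : ∃ d, N = m + d := ⟨N - m, by omega⟩
    nlinarith [sq_nonneg d]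
  · obtain ⟨d, rfl⟩ : ∃ d, m = N + d := ⟨m - N, by omega⟩
    nlinarith [sq_nonneg d]

lemma k_bound2 (N m : ℕ) : 2*m*N ≤ m*m + N*N := by
  rcases le_total m N with h | h
  · obtain ⟨d, rfl⟩ : ∃ d, N = m + d := ⟨N - m, by omega⟩; nlinarith [sq_nonneg d]
  · obtain ⟨d, rfl⟩ : ∃ d, m = N + d := ⟨m - N, by omega⟩; nlinarith [sq_nonneg d]

lemma cast_ej (N m : ℕ) : (ej N m : ℤ) = 4*(((m:ℤ) - N)^2 + ((m:ℤ) - N)) := by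
  unfold ej
  push_cast [k_bound N m]
  ring

lemma cast_eg (N m : ℕ) : (eg N m : ℤ) = 4*(((m:ℤ) - N)^2) := by
  unfold eg
  push_cast [k_bound2 N m]
  ring

/-- helper to prove ℕ equalities of exponents via ℤ -/
lemma nat_eq_of_int (a b : ℕ) (h : (a:ℤ) = b) : a = b := by exact_mod_cast h


lemma Xe {a b : ℕ} (h : a = b) : (X:R)^a = X^b := by rw [h]

lemma Xmul {a b c d : ℕ} (h : a + b = c + d) : (X:R)^a * X^b = X^c * X^d := by
  rw [← pow_add, ← pow_add]; exact Xe h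

-- three-term identity for gb, index ≥ 2
lemma gb_tt (N m : ℕ) : gb (2*N+2) (m+2)
    = X^(8*(m+2)) * gb (2*N) (m+2) + (1 + X^(8*(2*N+1))) * gb (2*N) (m+1)
      + X^(8*(2*N-m)) * gb (2*N) m := by
  rcases le_or_gt m (2*N) with h | h
  · have r1 : gb (2*N+2) (m+2) = gb (2*N+1) (m+2) + X^(8*(2*N-m)) * gb (2*N+1) (m+1) := by
      have := gb_succ_succ (2*N+1) (m+1)
      rwa [show 2*N+1 - (m+1) = 2*N - m by omega] at this
    have p1 : gb (2*N+1) (m+2) = X^(8*(m+2)) * gb (2*N) (m+2) + gb (2*N) (m+1) := by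
      have := gb_pascal2 (2*N) (m+1)
      rwa [show m+1+1 = m+2 by omega] at this
    have p2 : gb (2*N+1) (m+1) = X^(8*(m+1)) * gb (2*N) (m+1) + gb (2*N) m :=
      gb_pascal2 (2*N) m
    have hexp : (X:R)^(8*(2*N-m)) * X^(8*(m+1)) = X^(8*(2*N+1)) := by
      rw [← pow_add]; congr 1; omega
    rw [r1, p1, p2]
    linear_combination (gb (2*N) (m+1)) * hexp
  · rw [gb_eq_zero (show 2*N+2 < m+2 by omega), gb_eq_zero (show 2*N < m+2 by omega),
      gb_eq_zero (show 2*N < m+1 by omega), gb_eq_zero (show 2*N < m by omega)]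
    simp

lemma gb_tt1 (N : ℕ) : gb (2*N+2) 1 = X^8 * gb (2*N) 1 + (1 + X^(8*(2*N+1))) := by
  have r1 : gb (2*N+2) (0+1) = gb (2*N+1) (0+1) + X^(8*(2*N+1-0)) * gb (2*N+1) 0 :=
    gb_succ_succ (2*N+1) 0
  have p1 : gb (2*N+1) (0+1) = X^(8*(0+1)) * gb (2*N) (0+1) + gb (2*N) 0 :=
    gb_pascal2 (2*N) 0
  simp only [Nat.sub_zero, gb_zero_right, mul_one] at r1 p1
  rw [show (1:ℕ) = 0+1 by rfl] at *
  rw [r1, p1]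
  ring_nf

/-- Master summation step: expands the level-(N+1) sum in terms of level-N sums,
for any exponent family `e` satisfying the three shift identities. -/
lemma master (N : ℕ) (c : ℕ → R) (e : ℕ → ℕ → ℕ) (s1 s3 : ℕ)
    (hA : ∀ m, m ≤ 2*N+2 → e (N+1) m + 8*m = e N m + s1)
    (hB : ∀ m, e (N+1) (m+1) = e N m)
    (hC : ∀ m, m ≤ 2*N → e (N+1) (m+2) + 8*(2*N-m) = e N m + s3) :
    ∑ m ∈ range (2*N+3), c m * gb (2*N+2) m * X^(e (N+1) m)
    = X^s1 * ∑ m ∈ range (2*N+1), c m * gb (2*N) m * X^(e N m)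
    + (1+X^(8*(2*N+1))) * ∑ m ∈ range (2*N+1), c (m+1) * gb (2*N) m * X^(e N m)
    + X^s3 * ∑ m ∈ range (2*N+1), c (m+2) * gb (2*N) m * X^(e N m) := by
  have key : ∀ m ∈ range (2*N+3),
      c m * gb (2*N+2) m * X^(e (N+1) m)
      = X^s1 * (c m * gb (2*N) m * X^(e N m))
      + (1+X^(8*(2*N+1))) * (if m = 0 then 0 else c m * gb (2*N) (m-1) * X^(e N (m-1)))
      + X^s3 * (if m ≤ 1 then 0 else c m * gb (2*N) (m-2) * X^(e N (m-2))) := by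
    intro m hm
    rw [mem_range] at hm
    match m with
    | 0 =>
      norm_num
      have h0 : e (N+1) 0 = e N 0 + s1 := by have := hA 0 (by omega); omega
      rw [h0, pow_add]
      ring
    | 1 =>
      norm_num
      have h2 : e (N+1) 1 = e N 0 := hB 0
      have hx : (X:R)^(e (N+1) 1) * X^8 = X^(e N 1) * X^s1 :=
        Xmul (by have := hA 1 (by omega); omega)
      rw [gb_tt1 N, h2] at *
      linear_combination (c 1 * gb (2*N) 1) * hx
    | (m+2) =>
      rw [if_neg (by omega : ¬ (m+2 = 0)), if_neg (by omega : ¬ (m+2 ≤ 1)),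
        show m+2-1 = m+1 by omega, show m+2-2 = m by omega]
      rw [gb_tt N m]
      rcases le_or_gt m (2*N) with h | h
      · have hAx : (X:R)^(e (N+1) (m+2)) * X^(8*(m+2)) = X^(e N (m+2)) * X^s1 :=
          Xmul (by have := hA (m+2) (by omega); omega)
        have hBx : e (N+1) (m+2) = e N (m+1) := hB (m+1)
        have hCx : (X:R)^(e (N+1) (m+2)) * X^(8*(2*N-m)) = X^(e N m) * X^s3 :=
          Xmul (by have := hC m h; omega)
        rw [hBx] at hAx hCx ⊢
        linear_combination (c (m+2) * gb (2*N) (m+2)) * hAx + (c (m+2) * gb (2*N) m) * hCx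
      · rw [gb_eq_zero (show 2*N < m+2 by omega), gb_eq_zero (show 2*N < m+1 by omega),
          gb_eq_zero (show 2*N < m by omega)]
        ring
  rw [Finset.sum_congr rfl key]
  rw [Finset.sum_add_distrib, Finset.sum_add_distrib, ← Finset.mul_sum, ← Finset.mul_sum,
    ← Finset.mul_sum]
  congr 1
  · congr 1
    · -- first sum: drop the two top zero terms
      congr 1
      rw [show 2*N+3 = (2*N+1)+1+1 by omega, Finset.sum_range_succ, Finset.sum_range_succ,
        gb_eq_zero (show 2*N < 2*N+1 by omega), gb_eq_zero (show 2*N < 2*N+1+1 by omega)]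
      simp
    · -- middle sum: shift by one
      congr 1
      rw [show 2*N+3 = (2*N+2)+1 by omega, Finset.sum_range_succ']
      simp only [if_neg (Nat.succ_ne_zero _), if_pos rfl, Nat.add_sub_cancel]
      rw [Finset.sum_range_succ, gb_eq_zero (show 2*N < 2*N+1 by omega)]
      simp
  · -- last sum: shift by two
    congr 1
    rw [show 2*N+3 = (2*N+1)+1+1 by omega, Finset.sum_range_succ', Finset.sum_range_succ']
    simp only [if_neg (by omega : ¬ (Nat.succ (Nat.succ _) ≤ 1)),
      if_pos (by omega : (1:ℕ) ≤ 1), if_pos (by omega : (0:ℕ) ≤ 1)]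
    simp [show ∀ j:ℕ, j+1+1-2 = j from fun j => by omega]


def Pf (t : ℕ) : R := ∏ i ∈ range t, (1 - X^(8*i+8))
def Qf (t : ℕ) : R := ∏ i ∈ range t, (1 - X^(8*i+4))^2
def Zz (N : ℕ) : R := ∑ m ∈ range (2*N+1), (-1:R)^m * gb (2*N) m * X^(ej N m)
def Dd (N : ℕ) : R := ∑ m ∈ range (2*N+1), ((-1:R)^(m+1) * (m:R)) * gb (2*N) m * X^(ej N m)
def Sg (N : ℕ) : R := ∑ m ∈ range (2*N+1), (-1:R)^m * gb (2*N) m * X^(eg N m)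

lemma ej_A (N m : ℕ) : ej (N+1) m + 8*m = ej N m + 8*N := by
  apply nat_eq_of_int; push_cast [cast_ej]; ring

lemma ej_B (N m : ℕ) : ej (N+1) (m+1) = ej N m := by
  apply nat_eq_of_int; push_cast [cast_ej]; ring

lemma ej_C (N m : ℕ) (h : m ≤ 2*N) : ej (N+1) (m+2) + 8*(2*N-m) = ej N m + 8*(N+1) := by
  apply nat_eq_of_int; push_cast [cast_ej, h]; ring

lemma eg_A (N m : ℕ) : eg (N+1) m + 8*m = eg N m + 4*(2*N+1) := by
  apply nat_eq_of_int; push_cast [cast_eg]; ring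

lemma eg_B (N m : ℕ) : eg (N+1) (m+1) = eg N m := by
  apply nat_eq_of_int; push_cast [cast_eg]; ring

lemma eg_C (N m : ℕ) (h : m ≤ 2*N) : eg (N+1) (m+2) + 8*(2*N-m) = eg N m + 4*(2*N+1) := by
  apply nat_eq_of_int; push_cast [cast_eg, h]; ring

lemma Zz_rec (N : ℕ) :
    Zz (N+1) = (X^(8*N) + X^(8*(N+1)) - (1 + X^(8*(2*N+1)))) * Zz N := by
  unfold Zz
  rw [show 2*(N+1)+1 = 2*N+3 by omega, show 2*(N+1) = 2*N+2 by omega]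
  rw [master N (fun m => (-1:R)^m) ej (8*N) (8*(N+1))
    (fun m _ => ej_A N m) (ej_B N) (fun m h => ej_C N m h)]
  have h1 : ∑ m ∈ range (2*N+1), (-1:R)^(m+1) * gb (2*N) m * X^(ej N m)
      = -∑ m ∈ range (2*N+1), (-1:R)^m * gb (2*N) m * X^(ej N m) := by
    rw [← Finset.sum_neg_distrib]
    exact Finset.sum_congr rfl fun m _ => by rw [pow_succ]; ring
  have h2 : ∑ m ∈ range (2*N+1), (-1:R)^(m+2) * gb (2*N) m * X^(ej N m)
      = ∑ m ∈ range (2*N+1), (-1:R)^m * gb (2*N) m * X^(ej N m) :=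
    Finset.sum_congr rfl fun m _ => by rw [pow_add]; ring_nf
  rw [h1, h2]
  ring

lemma gb_two_one : gb 2 1 = 1 + X^8 := by
  have h := gb_succ_succ 1 0
  simp only [Nat.sub_zero, gb_zero_right, mul_one, gb_self] at h
  simpa using h

lemma Zz_one : Zz 1 = 0 := by
  unfold Zz
  rw [show 2*1+1 = 3 by rfl]
  rw [Finset.sum_range_succ, Finset.sum_range_succ, Finset.sum_range_succ,
    Finset.range_zero, Finset.sum_empty]
  rw [show (2:ℕ)*1 = 2 from rfl, gb_two_one, gb_zero_right,
    show gb 2 2 = 1 from gb_self 2]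
  rw [show ej 1 0 = 0 from rfl, show ej 1 1 = 0 from rfl, show ej 1 2 = 8 from rfl]
  ring

lemma Zz_eq_zero (N : ℕ) (h : 1 ≤ N) : Zz N = 0 := by
  induction N with
  | zero => omega
  | succ N ih =>
    rcases Nat.eq_or_lt_of_le h with h1 | h1
    · rw [show N + 1 = 1 by omega]
      exact Zz_one
    · rw [Zz_rec, ih (by omega), mul_zero]

lemma Dd_rec (N : ℕ) (h : 1 ≤ N) :
    Dd (N+1) = -((1 - X^(8*N)) * (1 - X^(8*(N+1)))) * Dd N := by
  unfold Dd
  rw [show 2*(N+1)+1 = 2*N+3 by omega, show 2*(N+1) = 2*N+2 by omega]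
  rw [master N (fun m => (-1:R)^(m+1) * (m:R)) ej (8*N) (8*(N+1))
    (fun m _ => ej_A N m) (ej_B N) (fun m h => ej_C N m h)]
  have hz := Zz_eq_zero N h
  unfold Zz at hz
  have h1 : ∑ m ∈ range (2*N+1), ((-1:R)^(m+1+1) * ((m+1:ℕ):R)) * gb (2*N) m * X^(ej N m)
      = -∑ m ∈ range (2*N+1), ((-1:R)^(m+1) * (m:R)) * gb (2*N) m * X^(ej N m)
        + ∑ m ∈ range (2*N+1), (-1:R)^m * gb (2*N) m * X^(ej N m) := by
    rw [← Finset.sum_neg_distrib, ← Finset.sum_add_distrib]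
    refine Finset.sum_congr rfl fun m _ => ?_
    push_cast
    rw [pow_succ, pow_succ]
    ring
  have h2 : ∑ m ∈ range (2*N+1), ((-1:R)^(m+2+1) * ((m+2:ℕ):R)) * gb (2*N) m * X^(ej N m)
      = ∑ m ∈ range (2*N+1), ((-1:R)^(m+1) * (m:R)) * gb (2*N) m * X^(ej N m)
        - 2 * ∑ m ∈ range (2*N+1), (-1:R)^m * gb (2*N) m * X^(ej N m) := by
    rw [Finset.mul_sum, ← Finset.sum_sub_distrib]
    refine Finset.sum_congr rfl fun m _ => ?_
    push_cast
    rw [pow_succ, pow_succ, pow_succ]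
    ring
  rw [h1, h2, hz]
  ring

lemma Dd_one : Dd 1 = 1 - X^8 := by
  unfold Dd
  rw [show 2*1+1 = 3 by rfl]
  rw [Finset.sum_range_succ, Finset.sum_range_succ, Finset.sum_range_succ,
    Finset.range_zero, Finset.sum_empty]
  rw [show (2:ℕ)*1 = 2 from rfl, gb_two_one, gb_zero_right,
    show gb 2 2 = 1 from gb_self 2]
  rw [show ej 1 0 = 0 from rfl, show ej 1 1 = 0 from rfl, show ej 1 2 = 8 from rfl]
  push_cast
  ring

lemma Dd_eq (N : ℕ) (h : 1 ≤ N) : Dd N = (-1:R)^(N+1) * (Pf N * Pf (N-1)) := by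
  induction N with
  | zero => omega
  | succ N ih =>
    rcases Nat.lt_or_ge 1 (N+1) with h1 | h1
    · have hN : 1 ≤ N := by omega
      rw [Dd_rec N hN, ih hN]
      have pf1 : Pf (N+1) = Pf N * (1 - X^(8*N+8)) := Finset.prod_range_succ _ N
      have pf2 : Pf N = Pf (N-1) * (1 - X^(8*(N-1)+8)) := by
        have := Finset.prod_range_succ (fun i => (1:R) - X^(8*i+8)) (N-1)
        rw [show N-1+1 = N by omega] at this
        exact this
      rw [show N+1-1 = N by omega, pf1]
      rw [show 8*(N-1)+8 = 8*N by omega] at pf2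
      rw [show (8*N+8 : ℕ) = 8*(N+1) by omega]
      calc -((1 - X^(8*N)) * (1 - X^(8*(N+1)))) * ((-1:R)^(N+1) * (Pf N * Pf (N-1)))
          = (-1:R)^(N+1+1) * ((Pf (N-1) * (1 - X^(8*N))) * (1-X^(8*(N+1))) * Pf N) := by
            rw [pow_succ]; ring
        _ = (-1:R)^(N+1+1) * (Pf N * (1 - X^(8*(N+1))) * Pf N) := by rw [← pf2]
        _ = (-1:R)^(N+1+1) * (Pf N * (1 - X^(8*(N+1))) * Pf (N+1-1)) := by
            rw [show N+1-1 = N by omega]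
    · have : N = 0 := by omega
      subst this
      rw [Dd_one]
      unfold Pf
      simp [Finset.prod_range_succ]

lemma Sg_rec (N : ℕ) :
    Sg (N+1) = (2 * X^(4*(2*N+1)) - (1 + X^(8*(2*N+1)))) * Sg N := by
  unfold Sg
  rw [show 2*(N+1)+1 = 2*N+3 by omega, show 2*(N+1) = 2*N+2 by omega]
  rw [master N (fun m => (-1:R)^m) eg (4*(2*N+1)) (4*(2*N+1))
    (fun m _ => eg_A N m) (eg_B N) (fun m h => eg_C N m h)]
  have h1 : ∑ m ∈ range (2*N+1), (-1:R)^(m+1) * gb (2*N) m * X^(eg N m)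
      = -∑ m ∈ range (2*N+1), (-1:R)^m * gb (2*N) m * X^(eg N m) := by
    rw [← Finset.sum_neg_distrib]
    exact Finset.sum_congr rfl fun m _ => by rw [pow_succ]; ring
  have h2 : ∑ m ∈ range (2*N+1), (-1:R)^(m+2) * gb (2*N) m * X^(eg N m)
      = ∑ m ∈ range (2*N+1), (-1:R)^m * gb (2*N) m * X^(eg N m) :=
    Finset.sum_congr rfl fun m _ => by rw [pow_add]; ring_nf
  rw [h1, h2]
  ring

lemma Sg_eq (N : ℕ) : Sg N = (-1:R)^N * Qf N := by
  induction N with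
  | zero =>
    unfold Sg Qf
    simp [show eg 0 0 = 0 from rfl]
  | succ N ih =>
    rw [Sg_rec, ih]
    have qf1 : Qf (N+1) = Qf N * (1 - X^(8*N+4))^2 := Finset.prod_range_succ _ N
    rw [qf1, pow_succ]
    have : (2 : R) * X^(4*(2*N+1)) - (1 + X^(8*(2*N+1)))
        = -((1 - X^(8*N+4))^2) := by
      have e1 : (X:R)^(8*N+4) * X^(8*N+4) = X^(8*(2*N+1)) := by
        rw [← pow_add]; exact Xe (by omega)
      have e2 : (4*(2*N+1) : ℕ) = 8*N+4 := by omega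
      rw [e2]
      linear_combination -e1
    rw [this]
    ring


lemma Pf_succ (t : ℕ) : Pf (t+1) = Pf t * (1 - X^(8*t+8)) := Finset.prod_range_succ _ t

@[simp] lemma Pf_zero : Pf 0 = 1 := rfl

/-- product formula: gb(n,k) * Pf(k) * Pf(n-k) = Pf(n) -/
lemma gb_mul_Pf (n : ℕ) : ∀ k, k ≤ n → gb n k * Pf k * Pf (n-k) = Pf n := by
  induction n with
  | zero => intro k hk; interval_cases k; simp
  | succ n ih =>
    intro k hk
    match k with
    | 0 => simp
    | (k+1) =>
      rcases Nat.eq_or_lt_of_le hk with he | hl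
      · rw [he.symm] at *
        rw [gb_self, Nat.sub_self]
        simp
      · have hkn : k + 1 ≤ n := by omega
        have hkn' : k ≤ n := by omega
        have i1 := ih (k+1) hkn
        have i0 := ih k hkn'
        rw [gb_succ_succ, show n+1-(k+1) = n-k by omega, Pf_succ n]
        have e3 : Pf (k+1) = Pf k * (1 - X^(8*k+8)) := Pf_succ k
        have e5 : Pf (n-k) = Pf (n-(k+1)) * (1 - X^(8*(n-k))) := by
          conv_lhs => rw [show n-k = (n-(k+1))+1 by omega]
          rw [Pf_succ, show 8*(n-(k+1))+8 = 8*(n-k) by omega]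
        have hx2 : (X:R)^(8*(n-k)) * X^(8*k+8) = X^(8*n+8) := by
          rw [← pow_add]; exact Xe (by omega)
        linear_combination (gb n (k+1) * Pf (k+1)) * e5 + (1 - X^(8*(n-k))) * i1
          + (X^(8*(n-k)) * gb n k * Pf (n-k)) * e3
          + (X^(8*(n-k)) * (1 - X^(8*k+8))) * i0 - Pf n * hx2

lemma MC_one_sub (M e : ℕ) (he : M ≤ e) : MC M (1 - X^e) 1 := by
  unfold MC
  rw [sub_sub_cancel_left]
  exact (pow_dvd_pow _ he).neg_right

lemma Pf_congr {M s t : ℕ} (hs : M ≤ s) (hst : s ≤ t) : MC M (Pf t) (Pf s) := by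
  obtain ⟨d, rfl⟩ : ∃ d, t = s + d := ⟨t - s, by omega⟩
  unfold Pf
  rw [Finset.prod_range_add]
  have h1 : MC M (∏ i ∈ range d, (1 - (X:R)^(8*(s+i)+8))) 1 := by
    have := MC.prod (M := M) (range d) (fun i => 1 - (X:R)^(8*(s+i)+8)) (fun _ => 1)
      (fun i _ => MC_one_sub M _ (by omega))
    simpa using this
  have := h1.mul_left (∏ i ∈ range s, (1 - (X:R)^(8*i+8)))
  simpa using this

/-- absorption: gb(2N,m) · Pf(M)² ≡ Pf(M) mod X^M when M ≤ m ≤ 2N-M -/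
lemma gb_eat {M N m : ℕ} (h1 : M ≤ m) (h2 : m + M ≤ 2*N) :
    MC M (gb (2*N) m * (Pf M * Pf M)) (Pf M) := by
  have hm : m ≤ 2*N := by omega
  have c1 : MC M (Pf M) (Pf m) := (Pf_congr (le_refl M) h1).symm
  have c2 : MC M (Pf M) (Pf (2*N - m)) := (Pf_congr (le_refl M) (by omega)).symm
  have step : MC M (gb (2*N) m * (Pf M * Pf M)) (gb (2*N) m * (Pf m * Pf (2*N - m))) :=
    (MC.refl M (gb (2*N) m)).mul (c1.mul c2)
  have : gb (2*N) m * (Pf m * Pf (2*N - m)) = Pf (2*N) := by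
    rw [← gb_mul_Pf (2*N) m hm]; ring
  rw [this] at step
  exact step.trans (Pf_congr (le_refl M) (by omega))


lemma MC_term_zero (M e : ℕ) (he : M ≤ e) (c : R) : MC M (c * X^e) 0 := by
  have := MC.zero_of M c e he
  rwa [mul_comm] at this

lemma npc {a b : ℕ} (h : a % 2 = b % 2) : (-1:R)^a = (-1)^b := by
  rcases Nat.even_or_odd a with ha | ha
  · have hb : Even b := by rw [Nat.even_iff] at *; omega
    rw [Even.neg_one_pow ha, Even.neg_one_pow hb]
  · have hb : Odd b := by rw [Nat.odd_iff] at *; omega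
    rw [Odd.neg_one_pow ha, Odd.neg_one_pow hb]

lemma Pf_unit (t : ℕ) : IsUnit (Pf t) := by
  induction t with
  | zero => exact isUnit_one
  | succ t ih => rw [Pf_succ]; exact ih.mul (isUnit_one_sub_pow _ (by omega))

lemma ej_big {n m : ℕ} (h : m ≤ n ∨ 3*n+3 < m) : n+1 ≤ ej (2*n+2) m := by
  have hc := cast_ej (2*n+2) m
  have key : ((n:ℤ)+1) ≤ (ej (2*n+2) m : ℤ) := by
    rw [hc]
    push_cast
    rcases h with h | h
    · have h1 : (m:ℤ) ≤ n := by exact_mod_cast h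
      have hp : ((n:ℤ)+2)*((n:ℤ)+1) ≤ ((2*n+2:ℤ)-m)*((2*n+1:ℤ)-m) :=
        mul_le_mul (by linarith) (by linarith) (by linarith) (by linarith)
      nlinarith [hp, sq_nonneg ((n:ℤ)), (show (0:ℤ) ≤ n by positivity)]
    · have h1 : 3*(n:ℤ)+3 < m := by exact_mod_cast h
      have hp : ((n:ℤ)+2)*((n:ℤ)+3) ≤ ((m:ℤ)-2*n-2)*((m:ℤ)-2*n-1) :=
        mul_le_mul (by linarith) (by linarith) (by linarith) (by linarith)
      nlinarith [hp, sq_nonneg ((n:ℤ)), (show (0:ℤ) ≤ n by positivity)]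
  exact_mod_cast key

lemma eg_big {n m : ℕ} (h : m ≤ n ∨ 3*n+3 < m) : n+1 ≤ eg (2*n+2) m := by
  have hc := cast_eg (2*n+2) m
  have key : ((n:ℤ)+1) ≤ (eg (2*n+2) m : ℤ) := by
    rw [hc]
    push_cast
    rcases h with h | h
    · have h1 : (m:ℤ) ≤ n := by exact_mod_cast h
      have hp : ((n:ℤ)+2)*((n:ℤ)+2) ≤ ((2*n+2:ℤ)-m)*((2*n+2:ℤ)-m) :=
        mul_le_mul (by linarith) (by linarith) (by linarith) (by linarith)
      nlinarith [hp, sq_nonneg ((n:ℤ)), (show (0:ℤ) ≤ n by positivity)]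
    · have h1 : 3*(n:ℤ)+3 < m := by exact_mod_cast h
      have hp : ((n:ℤ)+2)*((n:ℤ)+2) ≤ ((m:ℤ)-2*n-2)*((m:ℤ)-2*n-2) :=
        mul_le_mul (by linarith) (by linarith) (by linarith) (by linarith)
      nlinarith [hp, sq_nonneg ((n:ℤ)), (show (0:ℤ) ≤ n by positivity)]
  exact_mod_cast key

/-- generic "eat the binomials" step -/
lemma eat_sum (n : ℕ) (d : ℕ → R) (e : ℕ → ℕ)
    (hbig : ∀ m, m ≤ 2*(2*n+2) → (m ≤ n ∨ 3*n+3 < m) → n+1 ≤ e m) :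
    MC (n+1) (∑ m ∈ range (2*(2*n+2)+1), d m * (gb (2*(2*n+2)) m * (Pf (n+1) * Pf (n+1))) * X^(e m))
      (Pf (n+1) * ∑ m ∈ range (2*(2*n+2)+1), d m * X^(e m)) := by
  rw [Finset.mul_sum]
  apply MC.sum
  intro m hm
  rw [mem_range] at hm
  have zero_case : n+1 ≤ e m →
      MC (n+1) (d m * (gb (2*(2*n+2)) m * (Pf (n+1) * Pf (n+1))) * X^(e m))
        (Pf (n+1) * (d m * X^(e m))) := by
    intro he
    have hl : MC (n+1) (d m * (gb (2*(2*n+2)) m * (Pf (n+1) * Pf (n+1))) * X^(e m)) 0 :=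
      MC_term_zero _ _ he _
    have hr : MC (n+1) (Pf (n+1) * (d m * X^(e m))) 0 := by
      rw [show Pf (n+1) * (d m * X^(e m)) = (Pf (n+1) * d m) * X^(e m) by ring]
      exact MC_term_zero _ _ he _
    exact hl.trans hr.symm
  rcases le_or_gt m n with h1 | h1
  · exact zero_case (hbig m (by omega) (Or.inl h1))
  rcases le_or_gt m (3*n+3) with h2 | h2
  · have heat := gb_eat (M := n+1) (N := 2*n+2) (m := m) (by omega) (by omega)
    have step := (heat.mul_left (d m)).mul_right (X^(e m))
    refine step.trans ?_
    rw [show d m * Pf (n+1) * X^(e m) = Pf (n+1) * (d m * X^(e m)) by ring]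
    exact MC.refl _ _
  · exact zero_case (hbig m (by omega) (Or.inr h2))

def SjS (n : ℕ) : R := ∑ j ∈ range (n+1), C ((-1)^j * (2*(j:ℤ)+1)) * X^(4*(j*j+j))
def SgS (n : ℕ) : R := 1 + ∑ c ∈ range n, C (2 * (-1)^(c+1)) * X^(4*((c+1)*(c+1)))

lemma SjS_coeff (j : ℕ) : (C ((-1)^j * (2*(j:ℤ)+1)) : R) = (-1:R)^j * ((2*j+1 : ℕ) : R) := by
  rw [map_mul, map_pow, map_neg, map_one,
    show (2*(j:ℤ)+1) = ((2*j+1 : ℕ) : ℤ) by push_cast; ring, map_natCast]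

lemma SgS_coeff (c : ℕ) : (C (2 * (-1)^(c+1)) : R) = 2 * (-1:R)^(c+1) := by
  rw [map_mul, map_pow, map_neg, map_one, map_ofNat]


lemma four_sq_big {n j : ℕ} (h : n+1 ≤ j) : n+1 ≤ 4*(j*j+j) := by
  have h1 : 4*j ≤ 4*(j*j+j) := by
    rw [mul_add]
    exact Nat.le_add_left _ _
  omega

lemma W_J (n : ℕ) :
    MC (n+1) (∑ m ∈ range (2*(2*n+2)+1),
        ((-1:R)^(2*n+2+1) * ((-1)^(m+1) * (m:R))) * X^(ej (2*n+2) m)) (SjS n) := by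
  set N := 2*n+2 with hN
  set f : ℕ → R := fun m => ((-1:R)^(N+1) * ((-1)^(m+1) * (m:R))) * X^(ej N m) with hf
  -- drop the top term m = 2N
  have step1 : MC (n+1) (∑ m ∈ range (2*N+1), f m) (∑ m ∈ range (2*N), f m) := by
    rw [Finset.sum_range_succ]
    have ht : MC (n+1) (f (2*N)) 0 := by
      apply MC_term_zero
      exact ej_big (Or.inr (by omega))
    have := (MC.refl (n+1) (∑ m ∈ range (2*N), f m)).add ht
    rwa [add_zero] at this
  -- fold and reflect
  have step2 : ∑ m ∈ range (2*N), f m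
      = ∑ j ∈ range N, (f (N-1-j) + f (N+j)) := by
    rw [show 2*N = N + N by omega, Finset.sum_range_add, Finset.sum_add_distrib]
    congr 1
    exact (Finset.sum_range_reflect f N).symm
  -- per-term pairing
  have step3 : ∀ j ∈ range N, f (N-1-j) + f (N+j)
      = C ((-1)^j * (2*(j:ℤ)+1)) * X^(4*(j*j+j)) := by
    intro j hj
    rw [mem_range] at hj
    have hj' : j ≤ 2*n+1 := by omega
    have e1 : ej N (N+j) = 4*(j*j+j) := by
      apply nat_eq_of_int
      rw [cast_ej]
      push_cast
      ring
    have e2 : ej N (N-1-j) = 4*(j*j+j) := by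
      apply nat_eq_of_int
      rw [show N-1-j = 2*n+1-j by omega, cast_ej]
      push_cast [hj', hN]
      ring
    have s1 : (-1:R)^(N+1) * (-1)^(N+j+1) = (-1)^j := by
      rw [← pow_add]
      exact npc (by omega)
    have s2 : (-1:R)^(N+1) * (-1)^((N-1-j)+1) = (-1)^(j+1) := by
      rw [← pow_add]
      exact npc (by omega)
    have c1 : ((N-1-j : ℕ) : R) = ((2*n+1 : ℕ) : R) - (j : R) := by
      rw [show N-1-j = 2*n+1-j by omega]
      push_cast [hj']
      ring
    rw [hf]
    simp only [e1, e2]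
    rw [SjS_coeff]
    have expand : ((-1:R)^(N+1) * ((-1)^((N-1-j)+1) * ((N-1-j : ℕ):R))) * X^(4*(j*j+j))
        + ((-1:R)^(N+1) * ((-1)^(N+j+1) * ((N+j : ℕ):R))) * X^(4*(j*j+j))
        = ((-1:R)^(N+1) * (-1)^((N-1-j)+1)) * ((N-1-j : ℕ):R) * X^(4*(j*j+j))
        + ((-1:R)^(N+1) * (-1)^(N+j+1)) * ((N+j : ℕ):R) * X^(4*(j*j+j)) := by ring
    rw [expand, s1, s2, c1]
    have c2 : ((N+j : ℕ) : R) = ((2*n+2 : ℕ) : R) + (j : R) := by push_cast [hN]; ring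
    rw [c2]
    have c3 : ((2*n+1 : ℕ) : R) = 2*(n:R)+1 := by push_cast; ring
    have c4 : ((2*n+2 : ℕ) : R) = 2*(n:R)+2 := by push_cast; ring
    have c5 : ((2*j+1 : ℕ) : R) = 2*(j:R)+1 := by push_cast; ring
    rw [c3, c4, c5, pow_succ]
    ring
  -- truncate
  have step4 : MC (n+1) (∑ j ∈ range N, C ((-1)^j * (2*(j:ℤ)+1)) * X^(4*(j*j+j))) (SjS n) := by
    unfold SjS
    rw [show N = (n+1) + (n+1) by omega, Finset.sum_range_add]
    have htail : MC (n+1)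
        (∑ i ∈ range (n+1), C ((-1)^(n+1+i) * (2*((n+1+i:ℕ):ℤ)+1)) * X^(4*((n+1+i)*(n+1+i)+(n+1+i)))) 0 := by
      have := MC.sum (M := n+1) (range (n+1))
        (fun i => C ((-1)^(n+1+i) * (2*((n+1+i:ℕ):ℤ)+1)) * X^(4*((n+1+i)*(n+1+i)+(n+1+i))))
        (fun _ => 0)
        (fun i _ => MC_term_zero _ _ (four_sq_big (by omega)) _)
      simpa using this
    have := (MC.refl (n+1) (∑ j ∈ range (n+1), C ((-1)^j * (2*(j:ℤ)+1)) * X^(4*(j*j+j)))).add htail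
    rwa [add_zero] at this
  refine step1.trans ?_
  rw [step2, Finset.sum_congr rfl step3]
  exact step4

lemma Jfinal (n : ℕ) : MC (n+1) (Pf (2*n+2) ^ 3) (SjS n) := by
  set N := 2*n+2 with hN
  set M := n+1 with hM
  have hD : Dd N = (-1:R)^(N+1) * (Pf N * Pf (N-1)) := Dd_eq N (by omega)
  set d : ℕ → R := fun m => (-1:R)^(N+1) * ((-1)^(m+1) * (m:R)) with hd
  have hE : ∑ m ∈ range (2*N+1), d m * (gb (2*N) m * (Pf M * Pf M)) * X^(ej N m)
      = (-1:R)^(N+1) * ((Pf M * Pf M) * Dd N) := by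
    unfold Dd
    rw [Finset.mul_sum, Finset.mul_sum]
    exact Finset.sum_congr rfl fun m _ => by rw [hd]; ring
  have eat := eat_sum n d (ej N) (fun m _ h => ej_big h)
  rw [hE, hD] at eat
  have hsq : (-1:R)^(N+1) * (-1)^(N+1) = 1 := by
    rw [← pow_add]
    exact Even.neg_one_pow ⟨N+1, by ring⟩
  have hE2 : (-1:R)^(N+1) * ((Pf M * Pf M) * ((-1)^(N+1) * (Pf N * Pf (N-1))))
      = Pf M * (Pf M * (Pf N * Pf (N-1))) := by
    linear_combination (Pf M * Pf M * (Pf N * Pf (N-1))) * hsq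
  rw [hE2] at eat
  have cancel := eat.cancel_unit (Pf_unit M)
  have c1 : MC M (Pf N) (Pf M) := Pf_congr (le_refl M) (by omega)
  have c2 : MC M (Pf (N-1)) (Pf M) := Pf_congr (le_refl M) (by omega)
  have hA : MC M (Pf N ^ 3) (Pf M * (Pf M * Pf M)) := by
    rw [show Pf N ^ 3 = Pf N * (Pf N * Pf N) by ring]
    exact c1.mul (c1.mul c1)
  have hB : MC M (Pf M * (Pf N * Pf (N-1))) (Pf M * (Pf M * Pf M)) :=
    (MC.refl M (Pf M)).mul (c1.mul c2)
  exact (hA.trans hB.symm).trans (cancel.trans (W_J n))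

lemma W_G (n : ℕ) :
    MC (n+1) (∑ m ∈ range (2*(2*n+2)+1),
        ((-1:R)^(2*n+2) * (-1)^m) * X^(eg (2*n+2) m)) (SgS n) := by
  set N := 2*n+2 with hN
  set f : ℕ → R := fun m => ((-1:R)^N * (-1)^m) * X^(eg N m) with hf
  have egNN : eg N N = 0 := by
    apply nat_eq_of_int
    rw [cast_eg]
    push_cast
    ring
  have fN : f N = 1 := by
    rw [hf]
    simp only [egNN, pow_zero, mul_one]
    rw [← pow_add]
    exact (npc (by omega)).trans (pow_zero _)
  have split : ∑ m ∈ range (2*N+1), f m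
      = (∑ j ∈ range N, (f (N-1-j) + f (N+1+j))) + 1 := by
    rw [show 2*N+1 = (N+1) + N by omega, Finset.sum_range_add, Finset.sum_range_succ,
      Finset.sum_add_distrib]
    rw [fN, ← Finset.sum_range_reflect f N]
    have : ∀ x ∈ range N, f (N+1+x) = f (N+(x+1)) := fun x _ => by
      rw [show N+1+x = N+(x+1) by omega]
    rw [Finset.sum_congr rfl this]
    ring
  -- per-term pairing
  have step3 : ∀ j ∈ range N, f (N-1-j) + f (N+1+j)
      = C (2 * (-1)^(j+1)) * X^(4*((j+1)*(j+1))) := by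
    intro j hj
    rw [mem_range] at hj
    have hj' : j ≤ 2*n+1 := by omega
    have e1 : eg N (N+1+j) = 4*((j+1)*(j+1)) := by
      apply nat_eq_of_int
      rw [cast_eg]
      push_cast
      ring
    have e2 : eg N (N-1-j) = 4*((j+1)*(j+1)) := by
      apply nat_eq_of_int
      rw [show N-1-j = 2*n+1-j by omega, cast_eg]
      push_cast [hj', hN]
      ring
    have s1 : (-1:R)^N * (-1)^(N+1+j) = (-1)^(j+1) := by
      rw [← pow_add]
      exact npc (by omega)
    have s2 : (-1:R)^N * (-1)^(N-1-j) = (-1)^(j+1) := by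
      rw [← pow_add]
      exact npc (by omega)
    rw [hf]
    simp only [e1, e2]
    rw [SgS_coeff, s1, s2]
    ring
  have step4 : MC (n+1) ((∑ j ∈ range N, C (2 * (-1)^(j+1)) * X^(4*((j+1)*(j+1)))) + 1) (SgS n) := by
    unfold SgS
    rw [show N = n + (n+2) by omega, Finset.sum_range_add]
    have htail : MC (n+1)
        (∑ i ∈ range (n+2), C (2 * (-1)^((n+i)+1)) * X^(4*(((n+i)+1)*((n+i)+1)))) 0 := by
      have hb : ∀ i : ℕ, n+1 ≤ 4*(((n+i)+1)*((n+i)+1)) := by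
        intro i
        have h1 : n+1 ≤ (n+i)+1 := by omega
        calc n+1 ≤ 4*((n+i)+1) := by omega
        _ ≤ 4*(((n+i)+1)*((n+i)+1)) := by
            apply Nat.mul_le_mul_left
            exact Nat.le_mul_of_pos_left _ (by omega)
      have := MC.sum (M := n+1) (range (n+2))
        (fun i => C (2 * (-1)^((n+i)+1)) * X^(4*(((n+i)+1)*((n+i)+1))))
        (fun _ => 0)
        (fun i _ => MC_term_zero _ _ (hb i) _)
      simpa using this
    have := ((MC.refl (n+1) (∑ j ∈ range n, C (2 * (-1)^(j+1)) * X^(4*((j+1)*(j+1))))).add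
        htail).add (MC.refl (n+1) 1)
    rw [add_zero] at this
    refine this.trans ?_
    rw [show (∑ j ∈ range n, C (2 * (-1)^(j+1)) * X^(4*((j+1)*(j+1)))) + 1
      = 1 + ∑ c ∈ range n, C (2 * (-1)^(c+1)) * X^(4*((c+1)*(c+1))) by ring]
    exact MC.refl _ _
  rw [split, Finset.sum_congr rfl step3]
  exact step4

lemma Gfinal (n : ℕ) : MC (n+1) (Qf (2*n+2) * Pf (2*n+2)) (SgS n) := by
  set N := 2*n+2 with hN
  set M := n+1 with hM
  have hS : Sg N = (-1:R)^N * Qf N := Sg_eq N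
  set d : ℕ → R := fun m => (-1:R)^N * (-1)^m with hd
  have hE : ∑ m ∈ range (2*N+1), d m * (gb (2*N) m * (Pf M * Pf M)) * X^(eg N m)
      = (-1:R)^N * ((Pf M * Pf M) * Sg N) := by
    unfold Sg
    rw [Finset.mul_sum, Finset.mul_sum]
    exact Finset.sum_congr rfl fun m _ => by rw [hd]; ring
  have eat := eat_sum n d (eg N) (fun m _ h => eg_big h)
  rw [hE, hS] at eat
  have hsq : (-1:R)^N * (-1)^N = 1 := by
    rw [← pow_add]
    exact Even.neg_one_pow ⟨N, by ring⟩
  have hE2 : (-1:R)^N * ((Pf M * Pf M) * ((-1)^N * Qf N))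
      = Pf M * (Pf M * Qf N) := by
    linear_combination (Pf M * Pf M * Qf N) * hsq
  rw [hE2] at eat
  have cancel := eat.cancel_unit (Pf_unit M)
  have c1 : MC M (Pf N) (Pf M) := Pf_congr (le_refl M) (by omega)
  have hA : MC M (Qf N * Pf N) (Pf M * Qf N) := by
    have := (MC.refl M (Qf N)).mul c1
    refine this.trans ?_
    rw [show Qf N * Pf M = Pf M * Qf N by ring]
    exact MC.refl _ _
  exact hA.trans (cancel.trans (W_G n))



lemma prod_Ioc_eight (t : ℕ) : ∏ m ∈ Ioc 0 t, (1 - (X:R)^(8*m)) = Pf t := by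
  induction t with
  | zero => simp [Pf]
  | succ t ih =>
    rw [Finset.prod_Ioc_succ_top (by omega), ih, Pf_succ, show 8*(t+1) = 8*t+8 by omega]

lemma prod_Ioc_four (t : ℕ) : ∏ m ∈ Ioc 0 (2*t), (1 - (X:R)^(4*m))^2 = Qf t * Pf t ^ 2 := by
  induction t with
  | zero => simp [Pf, Qf]
  | succ t ih =>
    rw [show 2*(t+1) = (2*t+1)+1 by omega, Finset.prod_Ioc_succ_top (by omega),
      Finset.prod_Ioc_succ_top (by omega), ih]
    unfold Qf Pf
    rw [Finset.prod_range_succ, Finset.prod_range_succ]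
    rw [show 4*(2*t+1) = 8*t+4 by omega, show 4*(2*t+1+1) = 8*t+8 by omega]
    ring

lemma assembly (n : ℕ) :
    MC (n+1) (∏ m ∈ Finset.Icc 1 n, ((1 - (X:R)^(4*m))^2 * (1 - (X:R)^(8*m))^2))
      (SjS n * SgS n) := by
  set N := 2*n+2 with hN
  -- extend the product up to 2N
  have ext : MC (n+1) (∏ m ∈ Finset.Icc 1 n, ((1 - (X:R)^(4*m))^2 * (1 - (X:R)^(8*m))^2))
      (∏ m ∈ Ioc 0 (2*N), ((1 - (X:R)^(4*m))^2 * (1 - (X:R)^(8*m))^2)) := by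
    rw [show Finset.Icc 1 n = Finset.Ioc 0 n from Finset.Icc_add_one_left_eq_Ioc 0 n,
      ← Finset.prod_Ioc_consecutive _ (show 0 ≤ n by omega) (show n ≤ 2*N by omega)]
    have htail : MC (n+1) (∏ m ∈ Ioc n (2*N), ((1 - (X:R)^(4*m))^2 * (1 - (X:R)^(8*m))^2)) 1 := by
      have := MC.prod (M := n+1) (Ioc n (2*N))
        (fun m => ((1 - (X:R)^(4*m))^2 * (1 - (X:R)^(8*m))^2)) (fun _ => 1)
        (fun m hm => by
          show MC (n+1) ((1 - (X:R)^(4*m))^2 * (1 - (X:R)^(8*m))^2) 1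
          rw [mem_Ioc] at hm
          have h4 : n+1 ≤ 4*m := by omega
          have h8 : n+1 ≤ 8*m := by omega
          have u4 := MC_one_sub (n+1) (4*m) h4
          have u8 := MC_one_sub (n+1) (8*m) h8
          have := (u4.mul u4).mul (u8.mul u8)
          rw [mul_one, mul_one] at this
          rw [show ((1 - (X:R)^(4*m))^2 * (1 - (X:R)^(8*m))^2)
            = ((1 - (X:R)^(4*m)) * (1 - X^(4*m))) * ((1 - X^(8*m)) * (1 - X^(8*m))) by ring]
          exact this)
      simpa using this
    have := (MC.refl (n+1) (∏ m ∈ Ioc 0 n, ((1 - (X:R)^(4*m))^2 * (1 - (X:R)^(8*m))^2))).mul htail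
    rw [mul_one] at this
    exact this.symm
  refine ext.trans ?_
  -- split into Qf, Pf pieces
  have split : ∏ m ∈ Ioc 0 (2*N), ((1 - (X:R)^(4*m))^2 * (1 - (X:R)^(8*m))^2)
      = (Qf N * Pf N) * (Pf N * (Pf (2*N) * Pf (2*N))) := by
    rw [Finset.prod_mul_distrib, prod_Ioc_four, show ∏ m ∈ Ioc 0 (2*N), (1 - (X:R)^(8*m))^2
      = (∏ m ∈ Ioc 0 (2*N), (1 - (X:R)^(8*m)))^2 by rw [Finset.prod_pow], prod_Ioc_eight]
    ring
  rw [split]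
  have c1 : MC (n+1) (Pf (2*N)) (Pf N) := Pf_congr (by omega) (by omega)
  have step : MC (n+1) ((Qf N * Pf N) * (Pf N * (Pf (2*N) * Pf (2*N))))
      ((Qf N * Pf N) * (Pf N * (Pf N * Pf N))) :=
    (MC.refl _ _).mul ((MC.refl _ _).mul (c1.mul c1))
  refine step.trans ?_
  have step2 : MC (n+1) ((Qf N * Pf N) * (Pf N * (Pf N * Pf N))) ((SgS n) * (SjS n)) := by
    have h1 : MC (n+1) (Qf N * Pf N) (SgS n) := Gfinal n
    have h2 : MC (n+1) (Pf N * (Pf N * Pf N)) (SjS n) := by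
      have := Jfinal n
      rwa [show Pf N ^ 3 = Pf N * (Pf N * Pf N) by ring] at this
    exact h1.mul h2
  refine step2.trans ?_
  rw [show (SgS n) * (SjS n) = SjS n * SgS n by ring]
  exact MC.refl _ _


lemma coeff_CX (k e : ℕ) (a : ℤ) : coeff k (C a * X^e) = if k = e then a else 0 := by
  rw [coeff_C_mul, coeff_X_pow]
  split <;> simp

lemma sq_negpow (j : ℕ) : ((-1:ℤ)^j)^2 = 1 := by
  rw [← pow_mul, mul_comm, pow_mul]
  simp

/-- coefficient extraction -/
lemma coeff_main (n : ℕ) : coeff n (X * (SjS n * SgS n))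
    = (∑ j ∈ range (n+1), if n = 1+4*(j*j+j) then (-1:ℤ)^j * (2*(j:ℤ)+1) else 0)
    + (∑ j ∈ range (n+1), ∑ c ∈ range n,
        if n = 1+4*(j*j+j)+4*((c+1)*(c+1))
        then ((-1:ℤ)^j * (2*(j:ℤ)+1)) * (2 * (-1)^(c+1)) else 0) := by
  unfold SjS SgS
  have expand : (X:R) * ((∑ j ∈ range (n+1), C ((-1)^j * (2*(j:ℤ)+1)) * X^(4*(j*j+j)))
      * (1 + ∑ c ∈ range n, C (2 * (-1)^(c+1)) * X^(4*((c+1)*(c+1)))))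
      = (∑ j ∈ range (n+1), C ((-1)^j * (2*(j:ℤ)+1)) * X^(1+4*(j*j+j)))
      + ∑ j ∈ range (n+1), ∑ c ∈ range n,
          C (((-1)^j * (2*(j:ℤ)+1)) * (2 * (-1)^(c+1))) * X^(1+4*(j*j+j)+4*((c+1)*(c+1))) := by
    rw [mul_add, mul_one, mul_add]
    congr 1
    · rw [Finset.mul_sum]
      exact Finset.sum_congr rfl fun j _ => by rw [pow_add]; ring
    · rw [Finset.sum_mul, Finset.mul_sum]
      refine Finset.sum_congr rfl fun j _ => ?_
      rw [Finset.mul_sum, Finset.mul_sum]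
      refine Finset.sum_congr rfl fun c _ => ?_
      simp only [map_mul, map_pow, map_neg, map_one, map_ofNat, pow_add]
      ring
  rw [expand, map_add, map_sum, map_sum]
  congr 1
  · exact Finset.sum_congr rfl fun j _ => coeff_CX n _ _
  · refine Finset.sum_congr rfl fun j _ => ?_
    rw [map_sum]
    exact Finset.sum_congr rfl fun c _ => coeff_CX n _ _

/-- the primary-pair index set -/
def PS (n : ℕ) : Finset (ℤ × ℤ) :=
  (Finset.Icc (-(n : ℤ)) (n : ℤ) ×ˢ Finset.Icc (-(n : ℤ)) (n : ℤ)).filter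
    (fun p => ((p.2 ≡ 0 [ZMOD 4] ∧ p.1 ≡ 1 [ZMOD 4]) ∨ (p.2 ≡ 2 [ZMOD 4] ∧ p.1 ≡ 3 [ZMOD 4]))
      ∧ p.1 ^ 2 + p.2 ^ 2 = (n : ℤ))

lemma negpow_even {j : ℕ} (h : j % 2 = 0) : (-1:ℤ)^j = 1 :=
  Even.neg_one_pow (Nat.even_iff.2 h)

lemma negpow_odd {j : ℕ} (h : j % 2 = 1) : (-1:ℤ)^j = -1 :=
  Odd.neg_one_pow (Nat.odd_iff.2 h)

lemma self_le_sq (t : ℕ) : t ≤ t*t := by nlinarith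

lemma mem_PS_iff (n : ℕ) (p : ℤ × ℤ) : p ∈ PS n ↔
    ((-(n:ℤ) ≤ p.1 ∧ p.1 ≤ n) ∧ (-(n:ℤ) ≤ p.2 ∧ p.2 ≤ n))
    ∧ ((p.2 % 4 = 0 % 4 ∧ p.1 % 4 = 1 % 4) ∨ (p.2 % 4 = 2 % 4 ∧ p.1 % 4 = 3 % 4))
    ∧ p.1^2 + p.2^2 = (n:ℤ) := by
  unfold PS Int.ModEq
  simp [Finset.mem_filter, Finset.mem_product, Finset.mem_Icc, and_assoc]

/-- value of `(-1)^j (2j+1)` as a disjunction -/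
lemma val_negpow (j : ℕ) :
    (j % 2 = 0 ∧ (-1:ℤ)^j * (2*(j:ℤ)+1) = 2*(j:ℤ)+1)
    ∨ (j % 2 = 1 ∧ (-1:ℤ)^j * (2*(j:ℤ)+1) = -(2*(j:ℤ)+1)) := by
  rcases Nat.even_or_odd j with h | h
  · left
    rw [Nat.even_iff] at h
    rw [negpow_even h]
    exact ⟨h, by ring⟩
  · right
    rw [Nat.odd_iff] at h
    rw [negpow_odd h]
    exact ⟨h, by ring⟩

lemma claim_b_zero (n : ℕ) (hn : 1 ≤ n) :
    ∑ j ∈ range (n+1), (if n = 1+4*(j*j+j) then (-1:ℤ)^j * (2*(j:ℤ)+1) else 0)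
    = ∑ p ∈ (PS n).filter (fun p => p.2 = 0), p.1 := by
  classical
  rw [← Finset.sum_filter]
  apply Finset.sum_nbij' (i := fun (j:ℕ) => (((-1:ℤ)^j * (2*(j:ℤ)+1), (0:ℤ)) : ℤ × ℤ))
    (j := fun p => (p.1.natAbs - 1)/2)
  · -- forward membership
    intro j hj
    rw [Finset.mem_filter, Finset.mem_range] at hj
    obtain ⟨hjr, hcond⟩ := hj
    have hsq : ((2*(j:ℤ)+1))^2 = (n:ℤ) := by
      have h2 : (n:ℤ) = 1+4*((j:ℤ)*(j:ℤ)+(j:ℤ)) := by exact_mod_cast hcond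
      linear_combination -h2
    have hb : 2*(j:ℤ)+1 ≤ n := by nlinarith [hsq]
    have hb' : -(n:ℤ) ≤ -(2*(j:ℤ)+1) := by omega
    rw [Finset.mem_filter, mem_PS_iff]
    rcases val_negpow j with ⟨hpar, hval⟩ | ⟨hpar, hval⟩
    · refine ⟨⟨⟨⟨by omega, by omega⟩, by omega, by omega⟩, ?_, ?_⟩, rfl⟩
      · left
        constructor
        · omega
        · rw [hval]
          obtain ⟨s, rfl⟩ : ∃ s, j = 2*s := ⟨j/2, by omega⟩
          push_cast
          omega
      · rw [hval]
        simpa using hsq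
    · refine ⟨⟨⟨⟨by omega, by omega⟩, by omega, by omega⟩, ?_, ?_⟩, rfl⟩
      · left
        constructor
        · omega
        · rw [hval]
          obtain ⟨s, rfl⟩ : ∃ s, j = 2*s+1 := ⟨j/2, by omega⟩
          push_cast
          omega
      · rw [hval]
        have : (-(2*(j:ℤ)+1))^2 = (2*(j:ℤ)+1)^2 := by ring
        rw [this]
        simpa using hsq
  · -- backward membership
    intro p hp
    rw [Finset.mem_filter, mem_PS_iff] at hp
    obtain ⟨⟨hbdd, hprim, hsq⟩, hb0⟩ := hp
    have ha1 : p.1 % 4 = 1 % 4 := by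
      rcases hprim with ⟨_, h⟩ | ⟨h2, _⟩
      · exact h
      · omega
    set t := p.1.natAbs with ht
    have htodd : t % 4 = 1 ∨ t % 4 = 3 := by omega
    have htt : t * t = n := by
      have h1 : ((t*t : ℕ) : ℤ) = (n:ℤ) := by
        push_cast
        have := Int.natAbs_sq p.1
        rw [hb0] at hsq
        nlinarith [Int.natAbs_sq p.1, hsq]
      exact_mod_cast h1
    have htle : t ≤ n := by
      have := self_le_sq t
      omega
    rw [Finset.mem_filter, Finset.mem_range]
    obtain ⟨j, hj⟩ : ∃ j, t = 2*j+1 := ⟨(t-1)/2, by omega⟩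
    have e : (2*j+1)*(2*j+1) = 1+4*(j*j+j) := by ring
    have hn2 : n = 1+4*(j*j+j) := by rw [← e, ← hj]; exact htt.symm
    have hj2 : (t-1)/2 = j := by omega
    rw [hj2]
    exact ⟨by omega, hn2⟩
  · -- left inverse
    intro j hj
    rcases val_negpow j with ⟨hpar, hval⟩ | ⟨hpar, hval⟩ <;>
    · simp only [hval]
      have : ((2*(j:ℤ)+1)).natAbs = 2*j+1 := by omega
      first
        | (rw [this]; omega)
        | (rw [show (-(2*(j:ℤ)+1)).natAbs = 2*j+1 by omega]; omega)
  · -- right inverse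
    intro p hp
    rw [Finset.mem_filter, mem_PS_iff] at hp
    obtain ⟨⟨hbdd, hprim, hsq⟩, hb0⟩ := hp
    have ha1 : p.1 % 4 = 1 % 4 := by
      rcases hprim with ⟨_, h⟩ | ⟨h2, _⟩
      · exact h
      · omega
    have hne : p.1 ≠ 0 := by omega
    set t := p.1.natAbs with ht
    set j := (t-1)/2 with hjdef
    have haval : (p.1 = (t:ℤ) ∧ t % 4 = 1) ∨ (p.1 = -(t:ℤ) ∧ t % 4 = 3) := by omega
    have hxy : ((-1:ℤ)^j * (2*(j:ℤ)+1), (0:ℤ)) = p := by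
      have hsnd : p.2 = 0 := hb0
      rcases haval with ⟨hv, hm⟩ | ⟨hv, hm⟩
      · have hpar : j % 2 = 0 := by omega
        have : (-1:ℤ)^j * (2*(j:ℤ)+1) = p.1 := by
          rw [negpow_even hpar, hv]
          push_cast
          omega
        rw [this, ← hsnd]
      · have hpar : j % 2 = 1 := by omega
        have : (-1:ℤ)^j * (2*(j:ℤ)+1) = p.1 := by
          rw [negpow_odd hpar, hv]
          push_cast
          omega
        rw [this, ← hsnd]
    exact hxy
  · -- weights
    intro j hj
    rfl

lemma val_negpow' (E j : ℕ) :
    (E % 2 = 0 ∧ (-1:ℤ)^E * (2*(j:ℤ)+1) = 2*(j:ℤ)+1)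
    ∨ (E % 2 = 1 ∧ (-1:ℤ)^E * (2*(j:ℤ)+1) = -(2*(j:ℤ)+1)) := by
  rcases Nat.even_or_odd E with h | h
  · left
    rw [Nat.even_iff] at h
    rw [negpow_even h]
    exact ⟨h, by ring⟩
  · right
    rw [Nat.odd_iff] at h
    rw [negpow_odd h]
    exact ⟨h, by ring⟩

lemma claim_b_pos (n : ℕ) (hn : 1 ≤ n) :
    ∑ j ∈ range (n+1), ∑ c ∈ range n,
        (if n = 1+4*(j*j+j)+4*((c+1)*(c+1))
        then ((-1:ℤ)^j * (2*(j:ℤ)+1)) * (2 * (-1)^(c+1)) else 0)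
    = ∑ p ∈ (PS n).filter (fun p => 0 < p.2), 2 * p.1 := by
  classical
  rw [← Finset.sum_product']
  rw [← Finset.sum_filter]
  apply Finset.sum_nbij' (i := fun (q : ℕ × ℕ) =>
      (((-1:ℤ)^(q.1+q.2+1) * (2*(q.1:ℤ)+1), 2*((q.2:ℤ)+1)) : ℤ × ℤ))
    (j := fun p => ((p.1.natAbs - 1)/2, p.2.toNat/2 - 1))
  · -- forward membership
    intro q hq
    obtain ⟨j, c⟩ := q
    rw [Finset.mem_filter, Finset.mem_product, Finset.mem_range, Finset.mem_range] at hq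
    obtain ⟨⟨hjr, hcr⟩, hcond⟩ := hq
    have hsqz : (2*(j:ℤ)+1)^2 + (2*((c:ℤ)+1))^2 = (n:ℤ) := by
      have h2 : (n:ℤ) = 1+4*((j:ℤ)*(j:ℤ)+(j:ℤ))+4*(((c:ℤ)+1)*((c:ℤ)+1)) := by
        exact_mod_cast hcond
      linear_combination -h2
    have hb1 : 2*(j:ℤ)+1 ≤ n := by nlinarith [hsqz]
    have hb2 : 2*((c:ℤ)+1) ≤ n := by nlinarith [hsqz]
    rw [Finset.mem_filter, mem_PS_iff]
    rcases val_negpow' (j+c+1) j with ⟨hpar, hval⟩ | ⟨hpar, hval⟩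
    · refine ⟨⟨⟨⟨by rw [hval]; omega, by rw [hval]; omega⟩, by omega, by omega⟩, ?_, ?_⟩,
        by positivity⟩
      · rw [hval]
        push_cast
        omega
      · rw [hval]
        exact hsqz
    · refine ⟨⟨⟨⟨by rw [hval]; omega, by rw [hval]; omega⟩, by omega, by omega⟩, ?_, ?_⟩,
        by positivity⟩
      · rw [hval]
        push_cast
        omega
      · rw [hval]
        have e : (-(2*(j:ℤ)+1))^2 = (2*(j:ℤ)+1)^2 := by ring
        rw [e]
        exact hsqz
  · -- backward membership
    intro p hp
    rw [Finset.mem_filter, mem_PS_iff] at hp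
    obtain ⟨⟨hbdd, hprim, hsq⟩, hbpos⟩ := hp
    have haodd : p.1 % 4 = 1 % 4 ∨ p.1 % 4 = 3 % 4 := by omega
    have hbeven : p.2 % 4 = 0 % 4 ∨ p.2 % 4 = 2 % 4 := by omega
    set t := p.1.natAbs with ht
    set u := p.2.toNat with hu
    have huz : (u:ℤ) = p.2 := Int.toNat_of_nonneg (by omega)
    have htt : t*t + u*u = n := by
      have h1 : ((t*t + u*u : ℕ) : ℤ) = (n:ℤ) := by
        push_cast
        nlinarith [Int.natAbs_sq p.1, huz, hsq]
      exact_mod_cast h1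
    have htle : t ≤ n := by have := self_le_sq t; omega
    have hule : u ≤ n := by have := self_le_sq u; omega
    obtain ⟨j, hj⟩ : ∃ j, t = 2*j+1 := ⟨(t-1)/2, by omega⟩
    obtain ⟨c, hc⟩ : ∃ c, u = 2*c+2 := ⟨u/2 - 1, by omega⟩
    have e : (2*j+1)*(2*j+1) + (2*c+2)*(2*c+2) = 1+4*(j*j+j)+4*((c+1)*(c+1)) := by ring
    have hn2 : n = 1+4*(j*j+j)+4*((c+1)*(c+1)) := by
      rw [← e, ← hj, ← hc]; exact htt.symm
    rw [Finset.mem_filter, Finset.mem_product, Finset.mem_range, Finset.mem_range]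
    have hj2 : (t-1)/2 = j := by omega
    have hc2 : u/2 - 1 = c := by omega
    rw [hj2, hc2]
    exact ⟨⟨by omega, by omega⟩, hn2⟩
  · -- left inverse
    intro q hq
    obtain ⟨j, c⟩ := q
    rw [Prod.mk.injEq]
    rcases val_negpow' (j+c+1) j with ⟨hpar, hval⟩ | ⟨hpar, hval⟩ <;>
      simp only [hval] <;>
      exact ⟨by omega, by omega⟩
  · -- right inverse
    intro p hp
    rw [Finset.mem_filter, mem_PS_iff] at hp
    obtain ⟨⟨hbdd, hprim, hsq⟩, hbpos⟩ := hp
    set t := p.1.natAbs with ht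
    set u := p.2.toNat with hu
    have huz : (u:ℤ) = p.2 := Int.toNat_of_nonneg (by omega)
    have hbeven : u % 2 = 0 ∧ 2 ≤ u := by omega
    set j := (t-1)/2 with hjdef
    set c := u/2 - 1 with hcdef
    have hpar : ((j+c+1) % 2 = 0 ∧ p.1 = (t:ℤ)) ∨ ((j+c+1) % 2 = 1 ∧ p.1 = -(t:ℤ)) := by
      omega
    rw [Prod.mk.injEq]
    rcases hpar with ⟨hp2, hv⟩ | ⟨hp2, hv⟩
    · rw [negpow_even hp2]
      constructor
      · rw [hv]; push_cast; omega
      · push_cast; omega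
    · rw [negpow_odd hp2]
      constructor
      · rw [hv]; push_cast; omega
      · push_cast; omega
  · -- weights
    intro q hq
    obtain ⟨j, c⟩ := q
    show ((-1:ℤ)^j * (2*(j:ℤ)+1)) * (2 * (-1)^(c+1)) = 2 * ((-1:ℤ)^(j+c+1) * (2*(j:ℤ)+1))
    rw [pow_add, pow_add, pow_one]
    ring

lemma PS_neg_mem (n : ℕ) {p : ℤ × ℤ} (hp : p ∈ PS n) : (p.1, -p.2) ∈ PS n := by
  unfold PS at *
  simp only [Finset.mem_filter, Finset.mem_product, Finset.mem_Icc] at *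
  obtain ⟨⟨⟨h1, h2⟩, h3, h4⟩, hprim, hsq⟩ := hp
  refine ⟨⟨⟨h1, h2⟩, by omega, by omega⟩, ?_, by linear_combination hsq⟩
  unfold Int.ModEq at *
  rcases hprim with ⟨hb, ha⟩ | ⟨hb, ha⟩
  · exact Or.inl ⟨by omega, ha⟩
  · exact Or.inr ⟨by omega, ha⟩

lemma claim_neg_pos (n : ℕ) :
    ∑ p ∈ (PS n).filter (fun p => p.2 < 0), p.1
    = ∑ p ∈ (PS n).filter (fun p => 0 < p.2), p.1 := by
  apply Finset.sum_nbij' (fun p => (p.1, -p.2)) (fun p => (p.1, -p.2))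
  · intro p hp
    rw [Finset.mem_filter] at *
    exact ⟨PS_neg_mem n hp.1, by simp; omega⟩
  · intro p hp
    rw [Finset.mem_filter] at *
    exact ⟨PS_neg_mem n hp.1, by simp; omega⟩
  · intro p _; simp
  · intro p _; simp
  · intro p _; rfl

lemma claim_split (n : ℕ) :
    ∑ p ∈ PS n, p.1
    = (∑ p ∈ (PS n).filter (fun p => p.2 = 0), p.1)
      + ∑ p ∈ (PS n).filter (fun p => 0 < p.2), 2 * p.1 := by
  classical
  have h1 := Finset.sum_filter_add_sum_filter_not (PS n) (fun p => 0 < p.2) (fun p => p.1)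
  have h2 := Finset.sum_filter_add_sum_filter_not ((PS n).filter (fun p => ¬ 0 < p.2))
    (fun p => p.2 = 0) (fun p => p.1)
  rw [Finset.filter_filter, Finset.filter_filter] at h2
  have e1 : (PS n).filter (fun p => ¬ 0 < p.2 ∧ p.2 = 0) = (PS n).filter (fun p => p.2 = 0) := by
    apply Finset.filter_congr
    intro p _
    constructor
    · exact fun h => h.2
    · exact fun h => ⟨by omega, h⟩
  have e2 : (PS n).filter (fun p => ¬ 0 < p.2 ∧ ¬ p.2 = 0) = (PS n).filter (fun p => p.2 < 0) := by
    apply Finset.filter_congr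
    intro p _
    constructor
    · exact fun h => by omega
    · exact fun h => ⟨by omega, by omega⟩
  rw [e1, e2] at h2
  have h3 := claim_neg_pos n
  have h4 : ∑ p ∈ (PS n).filter (fun p => 0 < p.2), 2 * p.1
      = 2 * ∑ p ∈ (PS n).filter (fun p => 0 < p.2), p.1 := by
    rw [Finset.mul_sum]
  omega

lemma claim_imag (n : ℕ) : ∑ p ∈ PS n, p.2 = 0 := by
  classical
  refine Finset.sum_involution (fun p _ => (p.1, -p.2)) (fun p _ => by simp)
    (fun p _ hne h => ?_) (fun p hp => PS_neg_mem n hp) (fun p _ => by simp)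
  apply hne
  have h2 := congrArg Prod.snd h
  simp only [Prod.snd] at h2
  omega

theorem main_int (n : ℕ) (hn : 1 ≤ n) :
    PowerSeries.coeff n
      ((PowerSeries.X : PowerSeries ℤ) *
        ∏ m ∈ Finset.Icc 1 n,
          ((1 - (PowerSeries.X : PowerSeries ℤ) ^ (4 * m)) ^ 2 *
            (1 - (PowerSeries.X : PowerSeries ℤ) ^ (8 * m)) ^ 2))
    = ∑ p ∈ PS n, p.1 := by
  have hMC := assembly n
  have hMCX : MC (n+2) (X * ∏ m ∈ Finset.Icc 1 n, ((1 - (X:R)^(4*m))^2 * (1 - (X:R)^(8*m))^2))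
      (X * (SjS n * SgS n)) := by
    unfold MC at hMC ⊢
    rw [show (X:R) * (∏ m ∈ Finset.Icc 1 n, ((1 - (X:R)^(4*m))^2 * (1 - (X:R)^(8*m))^2))
        - X * (SjS n * SgS n)
      = X * ((∏ m ∈ Finset.Icc 1 n, ((1 - (X:R)^(4*m))^2 * (1 - (X:R)^(8*m))^2))
        - SjS n * SgS n) by ring]
    rw [show (n+2) = (n+1)+1 by omega, pow_succ, mul_comm ((X:R)^(n+1)) X]
    exact mul_dvd_mul_left X hMC
  rw [hMCX.coeff_eq (by omega), coeff_main n, claim_b_zero n hn, claim_b_pos n hn,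
    ← claim_split n]

end Eta32


open Eta32 in
/-- The coefficient of `X^n` in the q-expansion of `η(4z)^2 η(8z)^2`, i.e. in
`X ∏_{m=1}^∞ (1 - X^{4m})^2 (1 - X^{8m})^2` (truncated at `m = n`, which does not
change the coefficient of `X^n`), equals `Σ (a + bi)` over primary pairs `(a, b)`
with `a² + b² = n`.  All such pairs satisfy `|a|, |b| ≤ n`. -/
theorem eta4sq_eta8sq_coeff_eq_sum (n : ℕ) (hn : 1 ≤ n) :
    ((PowerSeries.coeff n
      ((PowerSeries.X : PowerSeries ℤ) *
        ∏ m ∈ Finset.Icc 1 n,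
          ((1 - (PowerSeries.X : PowerSeries ℤ) ^ (4 * m)) ^ 2 *
            (1 - (PowerSeries.X : PowerSeries ℤ) ^ (8 * m)) ^ 2)) : ℤ) : ℂ) =
    ∑ p ∈ (Finset.Icc (-(n : ℤ)) (n : ℤ) ×ˢ Finset.Icc (-(n : ℤ)) (n : ℤ)).filter
        (fun p => IsPrimaryPair p.1 p.2 ∧ p.1 ^ 2 + p.2 ^ 2 = (n : ℤ)),
      ((p.1 : ℂ) + (p.2 : ℂ) * Complex.I) := by
  have hset : (Finset.Icc (-(n : ℤ)) (n : ℤ) ×ˢ Finset.Icc (-(n : ℤ)) (n : ℤ)).filter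
        (fun p => IsPrimaryPair p.1 p.2 ∧ p.1 ^ 2 + p.2 ^ 2 = (n : ℤ)) = PS n := by
    ext p
    unfold PS IsPrimaryPair
    simp only [Finset.mem_filter]
  rw [hset]
  rw [Finset.sum_add_distrib, ← Finset.sum_mul, ← Int.cast_sum, ← Int.cast_sum,
    claim_imag n]
  rw [main_int n hn]
  simp
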